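/- If X=x is part of a cause of Y=y in (M,u⃗) according to Def 2 (contrastive necessity, actual strong sufficiency), then X=x is itself a cause of Y=y according to Def 8 (minimal necessity, actual strong sufficiency). -/
import Mathlib


open Classical

/-- A strongly recursive structural-equations (causal) model with exogenous
variables `U`, endogenous variables `V`, and values in `α`.  `rng v` is the
range `R(v)` of an endogenous variable; `F v u s` is the structural equation of
`v` evaluated in context `u` at the assignment `s` (it does not depend on
`s v`); `solve Z g u` is the unique solution of the model obtained by
intervening `Z ← g` in context `u`; `actual u` is the actual world of context
`u`; `prec` is a well-founded order witnessing strong recursivity. -/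
structure CausalModel (U V α : Type) where
  rng : V → Set α
  F : V → U → (V → α) → α
  F_rng : ∀ (v : V) (u : U) (s : V → α), F v u s ∈ rng v
  F_self : ∀ (v : V) (u : U) (s s' : V → α), (∀ w, w ≠ v → s w = s' w) → F v u s = F v u s'
  solve : Set V → (V → α) → U → V → α
  solve_mem : ∀ (Z : Set V) (g : V → α) (u : U), ∀ v ∈ Z, solve Z g u v = g v
  solve_not_mem : ∀ (Z : Set V) (g : V → α) (u : U) (v : V), v ∉ Z →
    solve Z g u v = F v u (solve Z g u)
  solve_unique : ∀ (Z : Set V) (g : V → α) (u : U) (s : V → α),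
    (∀ v ∈ Z, s v = g v) → (∀ v ∉ Z, s v = F v u s) → s = solve Z g u
  actual : U → V → α
  actual_def : ∀ (g : V → α) (u : U), solve ∅ g u = actual u
  prec : V → V → Prop
  prec_wf : WellFounded prec
  prec_dep : ∀ a b : V, (∃ (u : U) (s s' : V → α), (∀ w, s w ∈ rng w) ∧ (∀ w, s' w ∈ rng w) ∧
    (∀ w, w ≠ a → s w = s' w) ∧ F b u s ≠ F b u s') → prec a b

namespace CausalModel

variable {U V α : Type}

/-- The assignment that is `x` on `X` and `g` elsewhere. -/
noncomputable def merge (X : Set V) (x g : V → α) : V → α :=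
  fun v => if v ∈ X then x v else g v

/-- `g` is a valid setting: every variable gets a value in its range. -/
def Setting (M : CausalModel U V α) (g : V → α) : Prop := ∀ v, g v ∈ M.rng v

/-- `X⃗=x⃗` is directly sufficient for `Y⃗=y⃗`: in every context, intervening
`X⃗ ← x⃗` together with arbitrary (in-range) values for all remaining variables
`C⃗ = V ∖ (X⃗ ∪ Y⃗)` yields `Y⃗ = y⃗`. -/
def directlySuff (M : CausalModel U V α) (X : Set V) (x : V → α) (Y : Set V) (y : V → α) : Prop :=
  ∀ g : V → α, M.Setting g → (∀ v ∈ X, g v = x v) →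
    ∀ u : U, ∀ v ∈ Y, M.solve (X ∪ (X ∪ Y)ᶜ) g u v = y v

/-- Actual direct sufficiency: as `directlySuff` but only in the given context `u`. -/
def actDirectlySuff (M : CausalModel U V α) (u : U) (X : Set V) (x : V → α)
    (Y : Set V) (y : V → α) : Prop :=
  ∀ g : V → α, M.Setting g → (∀ v ∈ X, g v = x v) →
    ∀ v ∈ Y, M.solve (X ∪ (X ∪ Y)ᶜ) g u v = y v

/-- `X⃗=x⃗` is weakly sufficient for `Y⃗=y⃗`: in every context, `[X⃗ ← x⃗] Y⃗=y⃗`. -/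
def weaklySuff (M : CausalModel U V α) (X : Set V) (x : V → α) (Y : Set V) (y : V → α) : Prop :=
  ∀ u : U, ∀ v ∈ Y, M.solve X x u v = y v

/-- Actual weak sufficiency in context `u`: `(M,u) ⊨ [X⃗ ← x⃗] Y⃗=y⃗`. -/
def actWeaklySuff (M : CausalModel U V α) (u : U) (X : Set V) (x : V → α)
    (Y : Set V) (y : V → α) : Prop :=
  ∀ v ∈ Y, M.solve X x u v = y v

/-- `X⃗=x⃗` is strongly sufficient for `Y⃗=y⃗`: it is directly sufficient for some
superset `N⃗ ⊇ Y⃗` with values extending `y⃗`. -/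
def stronglySuff (M : CausalModel U V α) (X : Set V) (x : V → α) (Y : Set V) (y : V → α) : Prop :=
  ∃ (N : Set V) (n : V → α), Y ⊆ N ∧ (∀ v ∈ Y, n v = y v) ∧ M.directlySuff X x N n

/-- Actual strong sufficiency of `X⃗=x⃗` for the single effect `Y0 = y` along the
network `N` in context `u`. -/
def actStronglySuffNet (M : CausalModel U V α) (u : U) (X : Set V) (x : V → α)
    (Y0 : V) (y : α) (N : Set V) : Prop :=
  ∃ n : V → α, Y0 ∈ N ∧ n Y0 = y ∧ M.actDirectlySuff u X x N n

/-- `a` is a parent of `b`: the equation of `b` depends on the value of `a`. -/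
def IsParent (M : CausalModel U V α) (a b : V) : Prop :=
  ∃ (u : U) (s s' : V → α), M.Setting s ∧ M.Setting s' ∧
    (∀ w, w ≠ a → s w = s' w) ∧ M.F b u s ≠ M.F b u s'

/-- `a` is only a parent of `b`: the single edge `a → b` is the only directed
path from `a` to `b`. -/
def OnlyParent (M : CausalModel U V α) (a b : V) : Prop :=
  M.IsParent a b ∧ ¬ ∃ z, M.IsParent a z ∧ Relation.TransGen M.IsParent z b

/-- `R` is the set of root variables: equations of members of `R` depend only on
the context, and equations of all other variables do not depend on the context
(exogenous variables appear only in equations of the form `V = U`). -/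
def IsRootSet (M : CausalModel U V α) (R : Set V) : Prop :=
  (∀ v ∈ R, ∀ (u : U) (s s' : V → α), M.F v u s = M.F v u s') ∧
  (∀ v ∉ R, ∀ (u u' : U) (s : V → α), M.F v u s = M.F v u' s)

/-- Def 2: contrastive necessity with actual strong sufficiency (AC1, AC2, AC3). -/
def CauseDef2 (M : CausalModel U V α) (u : U) (X : Set V) (x : V → α) (Y0 : V) (y : α) : Prop :=
  (∀ v ∈ X, M.actual u v = x v) ∧ M.actual u Y0 = y ∧
  (∃ (W N : Set V) (x' : V → α), Disjoint W (X ∪ {Y0}) ∧ (∀ v ∈ X, x' v ∈ M.rng v) ∧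
      M.actStronglySuffNet u (X ∪ W) (merge X x (M.actual u)) Y0 y N ∧
      ∀ S ⊆ N, ¬ M.actStronglySuffNet u (X ∪ W) (merge X x' (M.actual u)) Y0 y S) ∧
  (∀ X' ⊂ X, ¬ ∃ (W N : Set V) (x' : V → α), Disjoint W (X' ∪ {Y0}) ∧
      (∀ v ∈ X', x' v ∈ M.rng v) ∧
      M.actStronglySuffNet u (X' ∪ W) (merge X' x (M.actual u)) Y0 y N ∧
      ∀ S ⊆ N, ¬ M.actStronglySuffNet u (X' ∪ W) (merge X' x' (M.actual u)) Y0 y S)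

/-- Def 3: contrastive necessity with actual direct sufficiency (AC1, AC2, AC3). -/
def CauseDef3 (M : CausalModel U V α) (u : U) (X : Set V) (x : V → α) (Y0 : V) (y : α) : Prop :=
  (∀ v ∈ X, M.actual u v = x v) ∧ M.actual u Y0 = y ∧
  (∃ (W : Set V) (x' : V → α), Disjoint W (X ∪ {Y0}) ∧ (∀ v ∈ X, x' v ∈ M.rng v) ∧
      M.actDirectlySuff u (X ∪ W) (merge X x (M.actual u)) {Y0} (fun _ => y) ∧
      ¬ M.actDirectlySuff u (X ∪ W) (merge X x' (M.actual u)) {Y0} (fun _ => y)) ∧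
  (∀ X' ⊂ X, ¬ ∃ (W : Set V) (x' : V → α), Disjoint W (X' ∪ {Y0}) ∧
      (∀ v ∈ X', x' v ∈ M.rng v) ∧
      M.actDirectlySuff u (X' ∪ W) (merge X' x (M.actual u)) {Y0} (fun _ => y) ∧
      ¬ M.actDirectlySuff u (X' ∪ W) (merge X' x' (M.actual u)) {Y0} (fun _ => y))

/-- Def 4 (singleton cause): contrastive necessity with non-actual weak sufficiency. -/
def CauseDef4 (M : CausalModel U V α) (u : U) (X0 : V) (x0 : α) (Y0 : V) (y : α) : Prop :=
  M.actual u X0 = x0 ∧ M.actual u Y0 = y ∧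
  ∃ (W : Set V) (x' : α), Disjoint W ({X0} ∪ {Y0} : Set V) ∧ x' ∈ M.rng X0 ∧
    M.weaklySuff ({X0} ∪ W) (merge {X0} (fun _ => x0) (M.actual u)) {Y0} (fun _ => y) ∧
    ¬ M.weaklySuff ({X0} ∪ W) (merge {X0} (fun _ => x') (M.actual u)) {Y0} (fun _ => y)

/-- Def 8 (singleton cause): minimal necessity with actual strong sufficiency
(minimality AC3 is automatic for singletons). -/
def CauseDef8 (M : CausalModel U V α) (u : U) (X0 : V) (x0 : α) (Y0 : V) (y : α) : Prop :=
  M.actual u X0 = x0 ∧ M.actual u Y0 = y ∧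
  ∃ W N : Set V, Disjoint W ({X0} ∪ {Y0} : Set V) ∧
    M.actStronglySuffNet u ({X0} ∪ W) (merge {X0} (fun _ => x0) (M.actual u)) Y0 y N ∧
    ∀ S ⊆ N, ¬ M.actStronglySuffNet u W (M.actual u) Y0 y S

/-- Def 10 (singleton cause): minimal necessity with non-actual weak sufficiency. -/
def CauseDef10 (M : CausalModel U V α) (u : U) (X0 : V) (x0 : α) (Y0 : V) (y : α) : Prop :=
  M.actual u X0 = x0 ∧ M.actual u Y0 = y ∧
  ∃ W : Set V, Disjoint W ({X0} ∪ {Y0} : Set V) ∧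
    M.weaklySuff ({X0} ∪ W) (merge {X0} (fun _ => x0) (M.actual u)) {Y0} (fun _ => y) ∧
    ¬ M.weaklySuff W (M.actual u) {Y0} (fun _ => y)

end CausalModel

namespace CausalModel

/-- if `X = x` is part of a cause `X⃗ = x⃗` of `Y = y` according to
Def 2 (contrastive necessity, actual strong sufficiency), then `X = x` is
itself a cause of `Y = y` according to Def 8 (minimal necessity, actual strong
sufficiency). -/
theorem part_of_def2_implies_def8 {U V α : Type} (M : CausalModel U V α) (u : U)
    (X : Set V) (x : V → α) (Y0 : V) (y : α) (X0 : V)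
    (hX0 : X0 ∈ X) (hYX : Y0 ∉ X)
    (h : CauseDef2 M u X x Y0 y) :
    CauseDef8 M u X0 (x X0) Y0 y := by
  obtain ⟨hAC1, hAC1Y, ⟨W, N, x', hdisj, hrng, hpos, hneg⟩, hmin⟩ := h
  have hWX : ∀ v ∈ W, v ∉ X := fun v hv hx => Set.disjoint_left.mp hdisj hv (Or.inl hx)
  have hWY : Y0 ∉ W := fun hv => Set.disjoint_left.mp hdisj hv (Or.inr rfl)
  have hmX : merge X x (M.actual u) = M.actual u := by
    funext v
    by_cases hv : v ∈ X <;> simp [merge, hv]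
    exact (hAC1 v hv).symm
  have hm1 : merge {X0} (fun _ => x X0) (M.actual u) = M.actual u := by
    funext v
    by_cases hv : v ∈ ({X0} : Set V) <;> simp [merge, hv]
    rw [Set.mem_singleton_iff] at hv; rw [hv]
    exact (hAC1 X0 hX0).symm
  have hmXd : merge (X \ {X0}) x (M.actual u) = M.actual u := by
    funext v
    by_cases hv : v ∈ X \ ({X0} : Set V) <;> simp [merge, hv]
    exact (hAC1 v hv.1).symm
  rw [hmX] at hpos
  refine ⟨hAC1 X0 hX0, hAC1Y, W ∪ (X \ {X0}), N \ X, ?_, ?_, ?_⟩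
  · -- disjointness
    rw [Set.disjoint_left]
    rintro v (hv | hv) hv2
    · rcases hv2 with hv2 | hv2
      · rw [Set.mem_singleton_iff] at hv2; subst hv2; exact hWX v hv hX0
      · rw [Set.mem_singleton_iff] at hv2; subst hv2; exact hWY hv
    · rcases hv2 with hv2 | hv2
      · rw [Set.mem_singleton_iff] at hv2; exact hv.2 hv2
      · rw [Set.mem_singleton_iff] at hv2; subst hv2; exact hYX hv.1
  · -- positive clause
    rw [hm1]
    have hset : ({X0} ∪ (W ∪ (X \ {X0})) : Set V) = X ∪ W := by
      ext v
      simp only [Set.mem_union, Set.mem_singleton_iff, Set.mem_diff]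
      constructor
      · rintro (rfl | hv | hv)
        · exact Or.inl hX0
        · exact Or.inr hv
        · exact Or.inl hv.1
      · rintro (hv | hv)
        · by_cases hvx : v = X0
          · exact Or.inl hvx
          · exact Or.inr (Or.inr ⟨hv, hvx⟩)
        · exact Or.inr (Or.inl hv)
    rw [hset]
    obtain ⟨n, hY0N, hnY0, hds⟩ := hpos
    refine ⟨n, ⟨hY0N, hYX⟩, hnY0, ?_⟩
    intro g hg hge v hv
    have hT : (X ∪ W) ∪ ((X ∪ W) ∪ (N \ X))ᶜ = (X ∪ W) ∪ ((X ∪ W) ∪ N)ᶜ := by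
      ext w
      simp only [Set.mem_union, Set.mem_compl_iff, Set.mem_diff]
      tauto
    rw [hT]
    exact hds g hg hge v hv.1
  · -- negative clause
    intro S hS hcon
    have hX' : X \ {X0} ⊂ X :=
      ⟨Set.diff_subset, fun hsub => (hsub hX0).2 rfl⟩
    apply hmin (X \ {X0}) hX'
    refine ⟨W, S, x', ?_, fun v hv => hrng v hv.1, ?_, ?_⟩
    · -- disjointness for AC3 witness
      rw [Set.disjoint_left]
      rintro v hv (hv2 | hv2)
      · exact hWX v hv hv2.1
      · rw [Set.mem_singleton_iff] at hv2; subst hv2; exact hWY hv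
    · -- positive part of AC3 witness, from hcon
      rw [hmXd, Set.union_comm (X \ {X0}) W]
      exact hcon
    · -- negative part of AC3 witness, from hneg
      intro S₂ hS₂ h2
      refine hneg S₂ (fun v hv => (hS (hS₂ hv)).1) ?_
      obtain ⟨n₂, hY0S₂, hn₂, hds₂⟩ := h2
      have hX0S₂ : X0 ∉ S₂ := fun hmem => (hS (hS₂ hmem)).2 hX0
      refine ⟨n₂, hY0S₂, hn₂, ?_⟩
      intro g hg hge v hv
      have hT : (X ∪ W) ∪ ((X ∪ W) ∪ S₂)ᶜ
          = ((X \ {X0}) ∪ W) ∪ (((X \ {X0}) ∪ W) ∪ S₂)ᶜ := by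
        ext w
        by_cases hw : w = X0
        · have hX0W : X0 ∉ W := fun hmem => hWX X0 hmem hX0
          subst hw
          simp [Set.mem_union, Set.mem_compl_iff, Set.mem_diff, hX0, hX0W, hX0S₂]
        · simp only [Set.mem_union, Set.mem_compl_iff, Set.mem_diff,
            Set.mem_singleton_iff, hw]
          tauto
      rw [hT]
      apply hds₂ g hg ?_ v hv
      rintro w (hw | hw)
      · rw [hge w (Or.inl hw.1)]
        simp [merge, hw.1, Set.mem_diff, hw.2]
      · rw [hge w (Or.inr hw)]
        have hwx : w ∉ X := hWX w hw
        simp [merge, hwx, fun h : w ∈ X \ ({X0} : Set V) => hwx h.1]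

end CausalModel
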